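/- Let R be a convergent and forward-closed term rewriting system. Then the right-reduced system R↓, obtained by normalizing all right-hand sides of rules of R, is convergent, generates the same congruence relation as R, and is forward-closed. -/

import Mathlib

/-! Basic first-order terms, positions, substitutions and rewriting. -/

inductive Term (F : Type) : Type
  | var : Nat → Term F
  | app : F → List (Term F) → Term F

namespace Term

def subst {F : Type} (σ : Nat → Term F) : Term F → Term F
  | var n => σ n
  | app f ts => app f (ts.attach.map fun ⟨t, _⟩ => t.subst σ)

def root {F : Type} : Term F → Option F
  | var _ => none
  | app f _ => some f

def label {F : Type} : Term F → F ⊕ Nat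
  | var n => Sum.inr n
  | app f _ => Sum.inl f

def IsVar {F : Type} : Term F → Prop
  | var _ => True
  | app _ _ => False

def varsL {F : Type} : Term F → List Nat
  | var n => [n]
  | app _ ts => (ts.attach.map fun ⟨t, _⟩ => t.varsL).flatten

end Term

abbrev Rule (F : Type) := Term F × Term F
abbrev TRS (F : Type) := Set (Rule F)

/-- `SubtermAt t p u` : the subterm of `t` at position `p` is `u`. -/
inductive SubtermAt {F : Type} : Term F → List Nat → Term F → Prop
  | here (t : Term F) : SubtermAt t [] t
  | there {f : F} {ts : List (Term F)} {i : Nat} {u : Term F} {p : List Nat} {v : Term F} :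
      ts[i]? = some u → SubtermAt u p v → SubtermAt (Term.app f ts) (i :: p) v

/-- `ReplaceAt t p v t'` : replacing the subterm of `t` at position `p` by `v` yields `t'`. -/
inductive ReplaceAt {F : Type} : Term F → List Nat → Term F → Term F → Prop
  | here (t u : Term F) : ReplaceAt t [] u u
  | there {f : F} {ts : List (Term F)} {i : Nat} {u : Term F} {p : List Nat} {v w : Term F} :
      ts[i]? = some u → ReplaceAt u p v w →
      ReplaceAt (Term.app f ts) (i :: p) v (Term.app f (ts.set i w))

variable {F : Type}

/-- One rewrite step using the given rule (at some position, with some substitution). -/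
def RuleStep (ρ : Rule F) (s t : Term F) : Prop :=
  ∃ (σ : Nat → Term F) (p : List Nat),
    SubtermAt s p (ρ.1.subst σ) ∧ ReplaceAt s p (ρ.2.subst σ) t

def OneStep (R : TRS F) (s t : Term F) : Prop := ∃ ρ ∈ R, RuleStep ρ s t

/-- A rewrite step at the root position. -/
def RootStep (R : TRS F) (s t : Term F) : Prop :=
  ∃ ρ ∈ R, ∃ σ : Nat → Term F, s = ρ.1.subst σ ∧ t = ρ.2.subst σ

def StarRW (R : TRS F) : Term F → Term F → Prop := Relation.ReflTransGen (OneStep R)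
def Plus (R : TRS F) : Term F → Term F → Prop := Relation.TransGen (OneStep R)
/-- Convertibility (the congruence / equational theory generated by `R`). -/
def Conv (R : TRS F) : Term F → Term F → Prop := Relation.EqvGen (OneStep R)
def Joinable (R : TRS F) (s t : Term F) : Prop := ∃ u, StarRW R s u ∧ StarRW R t u
def NormalForm (R : TRS F) (t : Term F) : Prop := ∀ u, ¬ OneStep R t u
/-- `t` is the `R`-normal form of `s`. -/
def NFof (R : TRS F) (s t : Term F) : Prop := StarRW R s t ∧ NormalForm R t
def Terminating (R : TRS F) : Prop := WellFounded (fun a b : Term F => OneStep R b a)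
def Confluent (R : TRS F) : Prop := ∀ s t u, StarRW R s t → StarRW R s u → Joinable R t u
def Convergent (R : TRS F) : Prop := Confluent R ∧ Terminating R

/-- every proper subterm is irreducible -/
def EpsIrreducible (R : TRS F) (t : Term F) : Prop :=
  ∀ p u, SubtermAt t p u → p ≠ [] → NormalForm R u

def InnermostRedex (R : TRS F) (t : Term F) : Prop :=
  EpsIrreducible R t ∧ ¬ NormalForm R t

/-- Forward-closed, via the one-step-to-normal-form characterization. -/
def FCclosed (R : TRS F) : Prop :=
  ∀ t, InnermostRedex R t → ∀ u, NFof R t u → OneStep R t u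

def Unifies (σ : Nat → Term F) (s t : Term F) : Prop := s.subst σ = t.subst σ

def IsMGU (σ : Nat → Term F) (s t : Term F) : Prop :=
  Unifies σ s t ∧ ∀ τ, Unifies τ s t → ∃ δ, ∀ x, τ x = (σ x).subst δ

def IsRenaming (ρ : Nat → Term F) : Prop :=
  ∃ f : Nat → Nat, Function.Injective f ∧ ∀ n, ρ n = Term.var (f n)

/-- Redundancy criterion for an oriented equation `e` whose right-hand side is
reachable from its left-hand side: some proper subterm of the lhs is reducible. -/
def Redundant (R : TRS F) (e : Rule F) : Prop :=
  ∃ p u, p ≠ ([] : List Nat) ∧ SubtermAt e.1 p u ∧ ¬ NormalForm R u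

/-- `R₁ ↝ R₂`: forward overlaps of rules of `R₂` (renamed apart) into
right-hand sides of rules of `R₁`, at non-variable positions, via an mgu. -/
def FStep (R₁ R₂ : TRS F) : TRS F :=
  { e | ∃ (l₁ r₁ l₂ r₂ : Term F) (ρ : Nat → Term F) (p : List Nat) (u : Term F)
          (σ : Nat → Term F) (r₁' : Term F),
      (l₁, r₁) ∈ R₁ ∧ (l₂, r₂) ∈ R₂ ∧ IsRenaming ρ ∧
      SubtermAt r₁ p u ∧ ¬ u.IsVar ∧ IsMGU σ u (l₂.subst ρ) ∧
      ReplaceAt r₁ p (r₂.subst ρ) r₁' ∧ e = (l₁.subst σ, r₁'.subst σ) }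

def FCiter (R : TRS F) : Nat → TRS F
  | 0 => R
  | k + 1 => FCiter R k ∪ { e | e ∈ FStep (FCiter R k) R ∧ ¬ Redundant (FCiter R k) e }

def FCinf (R : TRS F) : TRS F := ⋃ k, FCiter R k

/-- Forward-closed, via the forward-closure construction: `FC(R) = R`. -/
def ForwardClosedFC (R : TRS F) : Prop := FCinf R = R

/-- `RHS(R)`: `R` together with the conclusions of right-hand-side critical
pair inferences (second rule renamed apart). -/
def RHSset (R : TRS F) : TRS F :=
  R ∪ { e | ∃ (s t u₀ v₀ : Term F) (ρ σ : Nat → Term F), (s, t) ∈ R ∧ (u₀, v₀) ∈ R ∧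
        IsRenaming ρ ∧ IsMGU σ t (v₀.subst ρ) ∧
        s.subst σ ≠ (u₀.subst ρ).subst σ ∧ e = (s.subst σ, (u₀.subst ρ).subst σ) }

/-- the (unordered) pairs of root symbols of two equations coincide -/
def RootPairSimilar (e₁ e₂ : Rule F) : Prop :=
  (e₁.1.root = e₂.1.root ∧ e₁.2.root = e₂.2.root) ∨
  (e₁.1.root = e₂.2.root ∧ e₁.2.root = e₂.1.root)

def QuasiDet (E : TRS F) : Prop :=
  (∀ e ∈ E, ¬ e.1.IsVar ∧ ¬ e.2.IsVar) ∧
  (∀ e ∈ E, e.1.root ≠ e.2.root) ∧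
  (∀ e₁ ∈ E, ∀ e₂ ∈ E, e₁ ≠ e₂ → ¬ RootPairSimilar e₁ e₂)

def HasRootPairRepetition (E : TRS F) : Prop :=
  ∃ e₁ ∈ E, ∃ e₂ ∈ E, e₁ ≠ e₂ ∧ RootPairSimilar e₁ e₂

def VarPreserving (R : TRS F) : Prop :=
  ∀ e ∈ R, ∀ n, n ∈ Term.varsL e.1 ↔ n ∈ Term.varsL e.2

def RightReduced (R : TRS F) : Prop := ∀ e ∈ R, NormalForm R e.2

def AlmostLeftReduced (R : TRS F) : Prop :=
  ¬ ∃ (l₁ r₁ l₂ r₂ : Term F) (p : List Nat) (u : Term F) (σ : Nat → Term F),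
      (l₁, r₁) ∈ R ∧ (l₂, r₂) ∈ R ∧ p ≠ [] ∧ SubtermAt l₁ p u ∧ u = l₂.subst σ

def NonSubtermCollapsing (R : TRS F) : Prop :=
  ¬ ∃ (t u : Term F) (p : List Nat), p ≠ [] ∧ SubtermAt u p t ∧ Conv R t u

structure LMSystem (R : TRS F) : Prop where
  convergent : Convergent R
  almostLeftReduced : AlmostLeftReduced R
  rightReduced : RightReduced R
  nonCollapsing : NonSubtermCollapsing R
  forwardClosed : FCclosed R
  quasiDet : QuasiDet (RHSset R)

/-- the symbol (function symbol or variable) of a term at a position, if defined -/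
def labelAt {F : Type} : List Nat → Term F → Option (F ⊕ Nat)
  | [], t => some t.label
  | i :: p, Term.app _ ts => (ts[i]?).bind (labelAt p)
  | _ :: _, Term.var _ => none

/-- outermost distinguishing position -/
def ODP (s t : Term F) (p : List Nat) : Prop :=
  (labelAt p s ≠ none ∨ labelAt p t ≠ none) ∧
  labelAt p s ≠ labelAt p t ∧
  ∀ q, q <+: p → q ≠ p → labelAt q s = labelAt q t



/-! ### Auxiliary lemmas -/

section Aux

variable {F : Type}

theorem Term.ind {P : Term F → Prop} (hv : ∀ n, P (.var n))
    (ha : ∀ f ts, (∀ t ∈ ts, P t) → P (.app f ts)) : ∀ t, P t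
  | .var n => hv n
  | .app f ts => ha f ts (fun t ht => Term.ind hv ha t)
termination_by t => sizeOf t
decreasing_by
  simp_wf
  have := List.sizeOf_lt_of_mem ht
  omega

theorem subst_app (σ : Nat → Term F) (f : F) (ts : List (Term F)) :
    (Term.app f ts).subst σ = Term.app f (ts.map (Term.subst σ)) := by
  simp [Term.subst]

theorem subst_comp (σ τ : Nat → Term F) (t : Term F) :
    (t.subst τ).subst σ = t.subst (fun n => (τ n).subst σ) := by
  induction t using Term.ind with
  | hv n => simp [Term.subst]
  | ha f ts ih =>
    simp only [subst_app, List.map_map]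
    congr 1
    apply List.map_congr_left
    intro t ht
    simpa using ih t ht

theorem get?_set_self' {α : Type*} {l : List α} {i : Nat} {a b : α} (h : l[i]? = some a) :
    (l.set i b)[i]? = some b := by
  rw [List.getElem?_set_self', h]; rfl

theorem set_eq_of_get? {α : Type*} {l : List α} {i : Nat} {a : α} (h : l[i]? = some a) :
    l.set i a = l := by
  apply List.ext_getElem?
  intro j
  rcases eq_or_ne i j with rfl | hne
  · rw [List.getElem?_set_self', h]; rfl
  · rw [List.getElem?_set_ne hne]

theorem SubtermAt.subst {s u : Term F} {p : List Nat} (h : SubtermAt s p u) (σ : Nat → Term F) :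
    SubtermAt (s.subst σ) p (u.subst σ) := by
  induction h with
  | here t => exact .here _
  | there hget hsub ih =>
    rw [subst_app]
    exact .there (by rw [List.getElem?_map, hget]; rfl) ih

theorem ReplaceAt.subst {s v t : Term F} {p : List Nat} (h : ReplaceAt s p v t)
    (σ : Nat → Term F) : ReplaceAt (s.subst σ) p (v.subst σ) (t.subst σ) := by
  induction h with
  | here t u => exact .here _ _
  | there hget hrep ih =>
    rw [subst_app, subst_app, List.map_set]
    exact .there (by rw [List.getElem?_map, hget]; rfl) ih

theorem SubtermAt.trans {s u v : Term F} {p q : List Nat} (h1 : SubtermAt s p u)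
    (h2 : SubtermAt u q v) : SubtermAt s (p ++ q) v := by
  induction h1 generalizing q with
  | here => exact h2
  | there hget _ ih => exact .there hget (ih h2)

theorem ReplaceAt.subterm {s v t : Term F} {p : List Nat} (h : ReplaceAt s p v t) :
    SubtermAt t p v := by
  induction h with
  | here => exact .here _
  | there hget _ ih => exact .there (get?_set_self' hget) ih

theorem ReplaceAt.replace {s u s' v t : Term F} {p : List Nat} (h1 : ReplaceAt s p u s')
    (h2 : ReplaceAt s p v t) : ReplaceAt s' p v t := by
  induction h1 generalizing t with
  | here => cases h2; exact .here _ _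
  | @there f ts i a p' u0 w hget hr ih =>
    cases h2 with
    | @there _ _ _ b _ _ w' hget' hr' =>
      obtain rfl := Option.some.inj (hget.symm.trans hget')
      have h3 : ReplaceAt (Term.app f (ts.set i w)) (i :: p') v
          (Term.app f ((ts.set i w).set i w')) :=
        ReplaceAt.there (get?_set_self' hget) (ih hr')
      rwa [List.set_set] at h3

theorem ReplaceAt.det {s v t₁ t₂ : Term F} {p : List Nat} (h1 : ReplaceAt s p v t₁)
    (h2 : ReplaceAt s p v t₂) : t₁ = t₂ := by
  induction h1 generalizing t₂ with
  | here => cases h2; rfl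
  | there hget hr ih =>
    cases h2 with
    | there hget' hr' =>
      obtain rfl := Option.some.inj (hget.symm.trans hget')
      rw [ih hr']

theorem SubtermAt.replace_self {s u : Term F} {p : List Nat} (h : SubtermAt s p u) :
    ReplaceAt s p u s := by
  induction h with
  | here => exact .here _ _
  | @there f ts i a p' v hget _ ih =>
    have h2 : ReplaceAt (Term.app f ts) (i :: p') v (Term.app f (ts.set i a)) :=
      ReplaceAt.there hget ih
    rwa [set_eq_of_get? hget] at h2

theorem SubtermAt.replace_exists {s u : Term F} {p : List Nat} (h : SubtermAt s p u)
    (v : Term F) : ∃ t, ReplaceAt s p v t := by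
  induction h with
  | here => exact ⟨v, .here _ _⟩
  | there hget _ ih =>
    obtain ⟨w, hw⟩ := ih
    exact ⟨_, .there hget hw⟩

theorem SubtermAt.replace_lift {s u u' v : Term F} {p q : List Nat} (hs : SubtermAt s p u)
    (hr : ReplaceAt u q v u') : ∃ s', ReplaceAt s (p ++ q) v s' ∧ ReplaceAt s p u' s' := by
  induction hs generalizing u' with
  | here => exact ⟨u', hr, .here _ _⟩
  | there hget _ ih =>
    obtain ⟨s', h1, h2⟩ := ih hr
    exact ⟨_, .there hget h1, .there hget h2⟩

theorem OneStep.ctx {R : TRS F} {s u v : Term F} {p : List Nat} (hs : SubtermAt s p u)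
    (h : OneStep R u v) : ∃ t, OneStep R s t ∧ ReplaceAt s p v t := by
  obtain ⟨ρ, hρ, σ, q, hsub, hrep⟩ := h
  obtain ⟨t, h1, h2⟩ := hs.replace_lift hrep
  exact ⟨t, ⟨ρ, hρ, σ, p ++ q, hs.trans hsub, h1⟩, h2⟩

theorem StarRW.ctx {R : TRS F} {u v : Term F} (h : StarRW R u v) :
    ∀ {s t : Term F} {p : List Nat}, SubtermAt s p u → ReplaceAt s p v t → StarRW R s t := by
  induction h using Relation.ReflTransGen.head_induction_on with
  | refl =>
    intro s t p hs ht
    rw [ReplaceAt.det ht hs.replace_self]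
    exact Relation.ReflTransGen.refl
  | head hstep _ ih =>
    intro s t p hs ht
    obtain ⟨s₁, h1, h2⟩ := OneStep.ctx hs hstep
    exact Relation.ReflTransGen.head h1 (ih h2.subterm (h2.replace ht))

theorem OneStep.subst {R : TRS F} {u v : Term F} (h : OneStep R u v) (σ : Nat → Term F) :
    OneStep R (u.subst σ) (v.subst σ) := by
  obtain ⟨ρ, hρ, τ, p, hsub, hrep⟩ := h
  refine ⟨ρ, hρ, fun n => (τ n).subst σ, p, ?_, ?_⟩
  · have h1 := hsub.subst σ; rwa [subst_comp] at h1
  · have h1 := hrep.subst σ; rwa [subst_comp] at h1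

theorem StarRW.subst {R : TRS F} {u v : Term F} (h : StarRW R u v) (σ : Nat → Term F) :
    StarRW R (u.subst σ) (v.subst σ) := by
  induction h with
  | refl => exact Relation.ReflTransGen.refl
  | tail _ hstep ih => exact ih.tail (hstep.subst σ)

theorem exists_nf {R : TRS F} (hT : Terminating R) (s : Term F) : ∃ n, NFof R s n := by
  induction s using hT.induction with
  | _ s ih =>
    by_cases h : ∀ u, ¬ OneStep R s u
    · exact ⟨s, .refl, h⟩
    · push_neg at h
      obtain ⟨u, hu⟩ := h
      obtain ⟨n, h1, h2⟩ := ih u hu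
      exact ⟨n, .head hu h1, h2⟩

theorem star_of_nf {R : TRS F} {n u : Term F} (hn : NormalForm R n) (h : StarRW R n u) :
    n = u := by
  cases h.cases_head with
  | inl h => exact h
  | inr h => obtain ⟨c, hc, _⟩ := h; exact absurd hc (hn c)

theorem nf_unique {R : TRS F} (hc : Confluent R) {s n m : Term F}
    (h1 : NFof R s n) (h2 : NFof R s m) : n = m := by
  obtain ⟨v, hv1, hv2⟩ := hc s n m h1.1 h2.1
  rw [star_of_nf h1.2 hv1, star_of_nf h2.2 hv2]

theorem star_conv {Q : TRS F} {a b : Term F} (h : StarRW Q a b) : Conv Q a b := by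
  induction h with
  | refl => exact .refl _
  | tail _ hstep ih => exact .trans _ _ _ ih (.rel _ _ hstep)

end Aux

/-- right-reducing a convergent forward-closed system preserves
convergence, the generated congruence, and forward-closure. -/
theorem right_reduce_preserves {F : Type} (R : TRS F)
    (hconv : Convergent R) (hfc : FCclosed R)
    (Rd : TRS F) (hRd : Rd = { e | ∃ r : Term F, (e.1, r) ∈ R ∧ NFof R r e.2 }) :
    Convergent Rd ∧ (∀ s t, Conv Rd s t ↔ Conv R s t) ∧ FCclosed Rd := by
  obtain ⟨hcR, hTR⟩ := hconv
  -- every Rd-step is a nonempty sequence of R-steps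
  have hRdR : ∀ s t, OneStep Rd s t → Plus R s t := by
    intro s t h
    obtain ⟨⟨l, r'⟩, hmem, σ, p, hsub, hrep⟩ := h
    rw [hRd] at hmem
    obtain ⟨r, hr, hnf⟩ := hmem
    obtain ⟨t₁, hrep₁⟩ := hsub.replace_exists (r.subst σ)
    have hstep : OneStep R s t₁ := ⟨(l, r), hr, σ, p, hsub, hrep₁⟩
    have hstar : StarRW R (r.subst σ) (r'.subst σ) := hnf.1.subst σ
    have h2 : StarRW R t₁ t := hstar.ctx hrep₁.subterm (hrep₁.replace hrep)
    exact Relation.TransGen.head' hstep h2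
  have hstarRdR : ∀ s t, StarRW Rd s t → StarRW R s t := by
    intro s t h
    induction h with
    | refl => exact Relation.ReflTransGen.refl
    | tail _ hstep ih => exact ih.trans (hRdR _ _ hstep).to_reflTransGen
  have hTRd : Terminating Rd :=
    Subrelation.wf (fun {a b} h => Relation.transGen_swap.mpr (hRdR b a h)) hTR.transGen
  have plus_head : ∀ a b : Term F, Plus R a b → ∃ c, OneStep R a c := by
    intro a b h
    induction h with
    | single h => exact ⟨_, h⟩
    | tail _ _ ih => exact ih
  -- the two systems have the same normal forms
  have hnfiff : ∀ x, NormalForm Rd x ↔ NormalForm R x := by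
    intro x
    constructor
    · intro h u hu
      obtain ⟨⟨l, r⟩, hlr, σ, p, hsub, hrep⟩ := hu
      obtain ⟨r', hr'⟩ := exists_nf hTR r
      obtain ⟨t, ht⟩ := hsub.replace_exists (r'.subst σ)
      exact h t ⟨(l, r'), by rw [hRd]; exact ⟨r, hlr, hr'⟩, σ, p, hsub, ht⟩
    · intro h u hu
      obtain ⟨c, hc⟩ := plus_head _ _ (hRdR x u hu)
      exact h c hc
  have hnfof : ∀ s n, NFof Rd s n → NFof R s n :=
    fun s n h => ⟨hstarRdR _ _ h.1, (hnfiff n).mp h.2⟩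
  -- Rd reaches every R-normal form
  have hreach : ∀ s n, NFof R s n → StarRW Rd s n := by
    intro s n h
    obtain ⟨n', hn'⟩ := exists_nf hTRd s
    have he : n = n' := nf_unique hcR h (hnfof s n' hn')
    rw [he]; exact hn'.1
  have hcRd : Confluent Rd := by
    intro s t u hst hsu
    obtain ⟨t', ht'⟩ := exists_nf hTRd t
    obtain ⟨u', hu'⟩ := exists_nf hTRd u
    have h1 : NFof R s t' := ⟨(hstarRdR _ _ hst).trans (hnfof _ _ ht').1, (hnfof _ _ ht').2⟩
    have h2 : NFof R s u' := ⟨(hstarRdR _ _ hsu).trans (hnfof _ _ hu').1, (hnfof _ _ hu').2⟩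
    have he : t' = u' := nf_unique hcR h1 h2
    exact ⟨t', ht'.1, by rw [he]; exact hu'.1⟩
  have conv1 : ∀ s t, Conv Rd s t → Conv R s t := by
    intro s t h
    induction h with
    | rel a b hab => exact star_conv (hRdR a b hab).to_reflTransGen
    | refl a => exact .refl a
    | symm a b _ ih => exact .symm _ _ ih
    | trans a b c _ _ ih1 ih2 => exact .trans _ _ _ ih1 ih2
  have hstep2 : ∀ a b, OneStep R a b → Conv Rd a b := by
    intro a b hab
    obtain ⟨n, hn⟩ := exists_nf hTR b
    have han : NFof R a n := ⟨.head hab hn.1, hn.2⟩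
    exact .trans _ _ _ (star_conv (hreach a n han)) (.symm _ _ (star_conv (hreach b n hn)))
  have conv2 : ∀ s t, Conv R s t → Conv Rd s t := by
    intro s t h
    induction h with
    | rel a b hab => exact hstep2 a b hab
    | refl a => exact .refl a
    | symm a b _ ih => exact .symm _ _ ih
    | trans a b c _ _ ih1 ih2 => exact .trans _ _ _ ih1 ih2
  refine ⟨⟨hcRd, hTRd⟩, fun s t => ⟨conv1 s t, conv2 s t⟩, ?_⟩
  -- forward closure
  intro t ht u hu
  have hnf_u : NFof R t u := ⟨hstarRdR _ _ hu.1, (hnfiff u).mp hu.2⟩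
  have hinner : InnermostRedex R t := by
    obtain ⟨h1, h2⟩ := ht
    exact ⟨fun p v hv hp => (hnfiff v).mp (h1 p v hv hp), fun hn => h2 ((hnfiff t).mpr hn)⟩
  obtain ⟨⟨l, r⟩, hlr, σ, p, hsub, hrep⟩ := hfc t hinner u hnf_u
  have hsubu : SubtermAt u p (r.subst σ) := hrep.subterm
  have hnf_rσ : NormalForm R (r.subst σ) := by
    intro w hw
    obtain ⟨u', hu1, _⟩ := OneStep.ctx hsubu hw
    exact hnf_u.2 u' hu1
  obtain ⟨r', hr'⟩ := exists_nf hTR r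
  have he : r.subst σ = r'.subst σ := star_of_nf hnf_rσ (hr'.1.subst σ)
  refine ⟨(l, r'), by rw [hRd]; exact ⟨r, hlr, hr'⟩, σ, p, hsub, ?_⟩
  rw [← he]; exact hrep
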